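/- For a convex function f : [a,b] → ℝ with a < b, (2/(b-a))∫_a^b f(x) dx ≤ (1/2)[f(a) + f(b) + 2 f((a+b)/2)]. -/

import Mathlib

open MeasureTheory

lemma trapezoid (f : ℝ → ℝ) (a b : ℝ) (hab : a < b)
    (hconv : ConvexOn ℝ (Set.Icc a b) f)
    (hint : IntegrableOn f (Set.Icc a b)) :
    ∫ x in a..b, f x ≤ (b - a) * (f a + f b) / 2 := by
  have hba : (0:ℝ) < b - a := by linarith
  have key : ∀ x ∈ Set.Icc a b,
      f x ≤ ((b - x) / (b - a)) * f a + ((x - a) / (b - a)) * f b := by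
    intro x hx
    obtain ⟨hxa, hxb⟩ := hx
    have h1 : (0:ℝ) ≤ (b - x) / (b - a) := div_nonneg (by linarith) hba.le
    have h2 : (0:ℝ) ≤ (x - a) / (b - a) := div_nonneg (by linarith) hba.le
    have h3 : (b - x) / (b - a) + (x - a) / (b - a) = 1 := by
      field_simp
      ring
    have := hconv.2 (Set.left_mem_Icc.2 hab.le) (Set.right_mem_Icc.2 hab.le) h1 h2 h3
    have hx' : ((b - x) / (b - a)) • a + ((x - a) / (b - a)) • b = x := by
      simp only [smul_eq_mul]
      field_simp
      ring
    rw [hx'] at this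
    simpa using this
  have hg : IntervalIntegrable
      (fun x => ((b - x) / (b - a)) * f a + ((x - a) / (b - a)) * f b)
      volume a b := by
    apply Continuous.intervalIntegrable
    continuity
  have hf : IntervalIntegrable f volume a b := by
    rwa [intervalIntegrable_iff_integrableOn_Icc_of_le hab.le]
  have hmono := intervalIntegral.integral_mono_on hab.le hf hg
    (fun x hx => key x hx)
  refine hmono.trans_eq ?_
  have : ∫ x in a..b, (((b - x) / (b - a)) * f a + ((x - a) / (b - a)) * f b)
      = (b - a) * (f a + f b) / 2 := by
    rw [intervalIntegral.integral_add]
    · simp only [div_mul_eq_mul_div, intervalIntegral.integral_div]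
      rw [intervalIntegral.integral_mul_const, intervalIntegral.integral_mul_const]
      have i1 : (∫ x in a..b, (b - x)) = (b - a)^2 / 2 := by
        simp [intervalIntegral.integral_sub (intervalIntegrable_const)
          (intervalIntegral.intervalIntegrable_id), integral_id]
        ring
      have i2 : (∫ x in a..b, (x - a)) = (b - a)^2 / 2 := by
        simp [intervalIntegral.integral_sub
          (intervalIntegral.intervalIntegrable_id) (intervalIntegrable_const), integral_id]
        ring
      rw [i1, i2]
      field_simp
    · apply Continuous.intervalIntegrable; continuity
    · apply Continuous.intervalIntegrable; continuity
  exact this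

theorem bullen_inequality_alt (f : ℝ → ℝ) (a b : ℝ) (hab : a < b)
    (hconv : ConvexOn ℝ (Set.Icc a b) f)
    (hint : IntegrableOn f (Set.Icc a b)) :
    (2 / (b - a)) * ∫ x in a..b, f x ≤
      (1 / 2) * (f a + f b + 2 * f ((a + b) / 2)) := by
  set m := (a + b) / 2 with hm
  have ham : a < m := by rw [hm]; linarith
  have hmb : m < b := by rw [hm]; linarith
  have hsub1 : Set.Icc a m ⊆ Set.Icc a b := Set.Icc_subset_Icc le_rfl hmb.le
  have hsub2 : Set.Icc m b ⊆ Set.Icc a b := Set.Icc_subset_Icc ham.le le_rfl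
  have h1 : ∫ x in a..m, f x ≤ (m - a) * (f a + f m) / 2 :=
    trapezoid f a m ham (hconv.subset hsub1 (convex_Icc a m)) (hint.mono_set hsub1)
  have h2 : ∫ x in m..b, f x ≤ (b - m) * (f m + f b) / 2 :=
    trapezoid f m b hmb (hconv.subset hsub2 (convex_Icc m b)) (hint.mono_set hsub2)
  have hfab : IntervalIntegrable f volume a b := by
    rwa [intervalIntegrable_iff_integrableOn_Icc_of_le hab.le]
  have hf1 : IntervalIntegrable f volume a m :=
    hfab.mono_set (by rw [Set.uIcc_of_le ham.le, Set.uIcc_of_le hab.le]; exact hsub1)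
  have hf2 : IntervalIntegrable f volume m b :=
    hfab.mono_set (by rw [Set.uIcc_of_le hmb.le, Set.uIcc_of_le hab.le]; exact hsub2)
  have hsplit : ∫ x in a..b, f x = (∫ x in a..m, f x) + ∫ x in m..b, f x :=
    (intervalIntegral.integral_add_adjacent_intervals hf1 hf2).symm
  have hba : (0:ℝ) < b - a := by linarith
  have hma : m - a = (b - a) / 2 := by rw [hm]; ring
  have hbm : b - m = (b - a) / 2 := by rw [hm]; ring
  have htot : ∫ x in a..b, f x ≤ (b - a) * (f a + f b + 2 * f m) / 4 := by
    rw [hsplit]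
    calc (∫ x in a..m, f x) + ∫ x in m..b, f x
        ≤ (m - a) * (f a + f m) / 2 + (b - m) * (f m + f b) / 2 := add_le_add h1 h2
      _ = (b - a) * (f a + f b + 2 * f m) / 4 := by rw [hma, hbm]; ring
  rw [div_mul_eq_mul_div, div_le_iff₀ hba] at *
  nlinarith [htot]
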